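/- Let G be a disjoint union of cliques K_1,...,K_ℓ with |K_1| ≥ |K_2| ≥ ... ≥ |K_ℓ|, and let B = (b_1,...,b_c) with b_1 ≥ ... ≥ b_c. The greedy algorithm that processes cliques in non-increasing order of size and colors the j-th vertex of the current clique with the color of current j-th largest remaining budget (re-sorting remaining budgets after each clique, and failing if a needed budget is 0) succeeds if and only if G admits a proper coloring with each color i used at most b_i times. In particular, the budgeted coloring problem on cluster graphs is decidable in polynomial time. -/

import Mathlib

open Finset

/-- One step of the greedy algorithm: color a clique of size `s` using the `s`
largest remaining budgets (after re-sorting the budgets in non-increasing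
order), failing (`none`) if one of the needed budgets is `0`. -/
def greedyStep (s : ℕ) (bs : List ℕ) : Option (List ℕ) :=
  let sorted := bs.mergeSort (fun a b => decide (b ≤ a))
  if s ≤ sorted.length ∧ ∀ x ∈ sorted.take s, 1 ≤ x then
    some (((sorted.take s).map (fun x => x - 1)) ++ sorted.drop s)
  else none

/-- The greedy algorithm processing the list of clique sizes. -/
def greedy : List ℕ → List ℕ → Bool
  | [], _ => true
  | s :: rest, bs =>
    match greedyStep s bs with
    | some bs' => greedy rest bs'
    | none => false

lemma sortD_sorted (L : List ℕ) :
    List.Pairwise (fun a b : ℕ => b ≤ a) (L.mergeSort (fun a b => decide (b ≤ a))) := by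
  have h := List.pairwise_mergeSort (le := fun a b : ℕ => decide (b ≤ a))
    (fun a b c h1 h2 => by simp only [decide_eq_true_eq] at *; omega)
    (fun a b => by simp only [Bool.or_eq_true, decide_eq_true_eq]; omega) L
  exact h.imp (fun h => by simpa using h)

lemma sortD_unique {L M : List ℕ} (h : M.Perm L) (hs : List.Pairwise (fun a b : ℕ => b ≤ a) M) :
    M = L.mergeSort (fun a b => decide (b ≤ a)) := by
  haveI : IsAntisymm ℕ (fun a b : ℕ => b ≤ a) := ⟨fun a b h1 h2 => le_antisymm h2 h1⟩
  exact List.Perm.eq_of_pairwise (fun a b _ _ h1 h2 => le_antisymm h2 h1) hs (sortD_sorted L) (h.trans (List.mergeSort_perm L _).symm)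

/-- Sequential feasibility: process cliques one at a time, each choosing a set
of colors with positive remaining budget. -/
def Feas {c : ℕ} : List ℕ → (Fin c → ℕ) → Prop
  | [], _ => True
  | s :: rest, β => ∃ C : Finset (Fin c), C.card = s ∧ (∀ x ∈ C, 1 ≤ β x) ∧
      Feas rest (fun x => β x - if x ∈ C then 1 else 0)

lemma feas_perm {c : ℕ} (σ : Equiv.Perm (Fin c)) :
    ∀ (S : List ℕ) (β : Fin c → ℕ), Feas S β → Feas S (β ∘ σ)
  | [], β, _ => trivial
  | s :: rest, β, ⟨C, hcard, hpos, hrec⟩ => by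
    refine ⟨C.map σ.symm.toEmbedding, by simp [hcard], ?_, ?_⟩
    · intro x hx
      rw [Finset.mem_map_equiv] at hx
      simpa using hpos _ hx
    · have := feas_perm σ rest _ hrec
      convert this using 1
      funext x
      simp only [Function.comp_apply, Finset.mem_map_equiv, Equiv.symm_symm]

/-- Robin-Hood transfer: moving one unit of budget from a larger color `y` to a
smaller color `x` preserves feasibility. -/
lemma feas_transfer {c : ℕ} :
    ∀ (S : List ℕ) (β β' : Fin c → ℕ) (x y : Fin c), x ≠ y →
      β' x = β x + 1 → β y = β' y + 1 → β x + 1 ≤ β y →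
      (∀ z, z ≠ x → z ≠ y → β' z = β z) → Feas S β → Feas S β'
  | [], _, _, _, _, _, _, _, _, _, _ => trivial
  | s :: rest, β, β', x, y, hxy, hx, hy, hle, hz, hfeas => by
    by_cases hcase : β y = β x + 1
    · -- β' is β with x and y swapped
      have hβ' : β' = β ∘ (Equiv.swap x y) := by
        funext z
        by_cases h1 : z = x
        · subst h1; simp [Equiv.swap_apply_left]; omega
        by_cases h2 : z = y
        · subst h2; simp [Equiv.swap_apply_right]; omega
        · simp [Equiv.swap_apply_of_ne_of_ne h1 h2, hz z h1 h2]
      rw [hβ']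
      exact feas_perm _ _ _ hfeas
    · have h2 : β x + 2 ≤ β y := by omega
      obtain ⟨C, hcard, hpos, hrec⟩ := hfeas
      by_cases hxC : x ∈ C <;> by_cases hyC : y ∈ C
      · -- both in C : same C, one inner transfer
        refine ⟨C, hcard, ?_, ?_⟩
        · intro z hzC
          by_cases h1 : z = x
          · rw [h1]; omega
          by_cases h1' : z = y
          · rw [h1']; have := hpos x hxC; omega
          · rw [hz z h1 h1']; exact hpos z hzC
        · refine feas_transfer rest _ _ x y hxy ?_ ?_ ?_ ?_ hrec
          · simp only [hxC, if_pos, hx]; have := hpos x hxC; omega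
          · simp only [hyC, if_pos]; have := hpos x hxC; omega
          · simp only [hxC, hyC, if_pos]; have := hpos x hxC; omega
          · intro z h1 h1'; simp only [hz z h1 h1']
      · -- x ∈ C, y ∉ C : use C' = insert y (C.erase x), two inner transfers
        have hpx := hpos x hxC
        refine ⟨insert y (C.erase x), ?_, ?_, ?_⟩
        · rw [Finset.card_insert_of_notMem (fun h => hyC (Finset.mem_of_mem_erase h)),
            Finset.card_erase_of_mem hxC, hcard]
          have : 1 ≤ C.card := Finset.card_pos.mpr ⟨x, hxC⟩
          omega
        · intro z hzC
          rcases Finset.mem_insert.mp hzC with h1 | h1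
          · rw [h1]; omega
          · have hzx : z ≠ x := Finset.ne_of_mem_erase h1
            have hzy : z ≠ y := fun h => hyC (h ▸ Finset.mem_of_mem_erase h1)
            rw [hz z hzx hzy]; exact hpos z (Finset.mem_of_mem_erase h1)
        · -- two transfers from γ = β - 1_C to γ'' = β' - 1_{C'}
          set γ := fun z => β z - if z ∈ C then 1 else 0 with hγ
          set mid := fun z => if z = x then β x else if z = y then β y - 1 else γ z with hmid
          have step1 : Feas rest mid := by
            refine feas_transfer rest γ mid x y hxy ?_ ?_ ?_ ?_ hrec
            · simp [hmid, hγ, hxy, hxC]; omega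
            · simp [hmid, hγ, hxy.symm, hyC]; omega
            · simp [hγ, hxC, hyC]; omega
            · intro z h1 h1'; simp [hmid, h1, h1']
          refine feas_transfer rest mid _ x y hxy ?_ ?_ ?_ ?_ step1
          · have hxC' : x ∉ insert y (C.erase x) := by
              simp [Finset.mem_insert, hxy]
            simp [hmid, hxC', hx]
          · have hyC' : y ∈ insert y (C.erase x) := Finset.mem_insert_self _ _
            simp [hmid, hxy.symm, hyC']
            omega
          · simp [hmid, hxy.symm]; omega
          · intro z h1 h1'
            have hmem : z ∈ insert y (C.erase x) ↔ z ∈ C := by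
              simp [Finset.mem_insert, h1', Finset.mem_erase, h1]
            rw [hz z h1 h1', if_congr hmem rfl rfl]
            simp [hmid, h1, h1', hγ]
      · -- y ∈ C, x ∉ C : use C' = insert x (C.erase y), inner states equal
        refine ⟨insert x (C.erase y), ?_, ?_, ?_⟩
        · rw [Finset.card_insert_of_notMem (fun h => hxC (Finset.mem_of_mem_erase h)),
            Finset.card_erase_of_mem hyC, hcard]
          have : 1 ≤ C.card := Finset.card_pos.mpr ⟨y, hyC⟩
          omega
        · intro z hzC
          rcases Finset.mem_insert.mp hzC with h1 | h1
          · rw [h1]; omega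
          · have hzy : z ≠ y := Finset.ne_of_mem_erase h1
            have hzx : z ≠ x := fun h => hxC (h ▸ Finset.mem_of_mem_erase h1)
            rw [hz z hzx hzy]; exact hpos z (Finset.mem_of_mem_erase h1)
        · convert hrec using 1
          funext z
          by_cases h1 : z = x
          · rw [h1]
            have hx' : x ∈ insert x (C.erase y) := Finset.mem_insert_self _ _
            simp [hx', hxC, hx]
          by_cases h1' : z = y
          · rw [h1']
            have hy' : y ∉ insert x (C.erase y) := by
              simp [Finset.mem_insert, hxy.symm]
            simp [hy', hyC]; omega
          · have hmem : z ∈ insert x (C.erase y) ↔ z ∈ C := by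
              simp [Finset.mem_insert, h1, Finset.mem_erase, h1']
            rw [hz z h1 h1', if_congr hmem rfl rfl]
      · -- neither in C : same C, one inner transfer
        refine ⟨C, hcard, ?_, ?_⟩
        · intro z hzC
          have h1 : z ≠ x := fun h => hxC (h ▸ hzC)
          have h1' : z ≠ y := fun h => hyC (h ▸ hzC)
          rw [hz z h1 h1']; exact hpos z hzC
        · refine feas_transfer rest _ _ x y hxy ?_ ?_ ?_ ?_ hrec
          · simp [hxC, hx]
          · simp [hyC]; omega
          · simp [hxC, hyC]; omega
          · intro z h1 h1'; simp only [hz z h1 h1']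

lemma feas_top_aux {c : ℕ} (rest : List ℕ) (β : Fin c → ℕ) :
    ∀ (n : ℕ) (C : Finset (Fin c)), (∑ z ∈ Cᶜ, β z ≤ n) →
      (∀ x ∈ C, 1 ≤ β x) → Feas rest (fun z => β z - if z ∈ C then 1 else 0) →
      ∃ C' : Finset (Fin c), C'.card = C.card ∧ (∀ x ∈ C', 1 ≤ β x) ∧
        (∀ x ∈ C', ∀ y, y ∉ C' → β y ≤ β x) ∧
        Feas rest (fun z => β z - if z ∈ C' then 1 else 0) := by
  intro n
  induction n with
  | zero =>
    intro C hsum hpos hrec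
    refine ⟨C, rfl, hpos, ?_, hrec⟩
    intro x hx y hy
    have : β y ≤ ∑ z ∈ Cᶜ, β z := Finset.single_le_sum (fun i _ => Nat.zero_le _)
      (Finset.mem_compl.mpr hy)
    have := hpos x hx
    omega
  | succ n ih =>
    intro C hsum hpos hrec
    by_cases htop : ∀ x ∈ C, ∀ y, y ∉ C → β y ≤ β x
    · exact ⟨C, rfl, hpos, htop, hrec⟩
    · push_neg at htop
      obtain ⟨x, hxC, y, hyC, hlt⟩ := htop
      have hpx := hpos x hxC
      have hxy : x ≠ y := fun h => hyC (h ▸ hxC)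
      set C' := insert y (C.erase x) with hC'
      have hxC' : x ∉ C' := by simp [hC', Finset.mem_insert, hxy]
      have hyC' : y ∈ C' := Finset.mem_insert_self _ _
      have hcard' : C'.card = C.card := by
        rw [hC', Finset.card_insert_of_notMem (fun h => hyC (Finset.mem_of_mem_erase h)),
          Finset.card_erase_of_mem hxC]
        have : 1 ≤ C.card := Finset.card_pos.mpr ⟨x, hxC⟩
        omega
      have hmemC' : ∀ z, z ≠ x → z ≠ y → (z ∈ C' ↔ z ∈ C) := by
        intro z h1 h2
        simp [hC', Finset.mem_insert, h2, Finset.mem_erase, h1]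
      -- new complement sum is strictly smaller
      have hcompl : C'ᶜ = insert x (Cᶜ.erase y) := by
        ext z
        by_cases h1 : z = x
        · simp [h1, hxC', hxC, hxy]
        by_cases h2 : z = y
        · simp [h2, hyC', hyC, hxy.symm]
        · simp [Finset.mem_compl, hmemC' z h1 h2, Finset.mem_erase, h1, h2]
      have hsum' : ∑ z ∈ C'ᶜ, β z ≤ n := by
        have hy' : y ∈ Cᶜ := Finset.mem_compl.mpr hyC
        have hx'' : x ∉ Cᶜ.erase y := fun h =>
          (Finset.mem_compl.mp (Finset.mem_of_mem_erase h)) hxC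
        have e1 : ∑ z ∈ C'ᶜ, β z = β x + ∑ z ∈ Cᶜ.erase y, β z := by
          rw [hcompl, Finset.sum_insert hx'']
        have e2 : β y + ∑ z ∈ Cᶜ.erase y, β z = ∑ z ∈ Cᶜ, β z := by
          rw [Finset.add_sum_erase _ _ hy']
        omega
      rw [← hcard']
      refine ih C' hsum' ?_ ?_
      · intro z hz
        rcases Finset.mem_insert.mp hz with h1 | h1
        · rw [h1]; omega
        · exact hpos z (Finset.mem_of_mem_erase h1)
      · refine feas_transfer rest _ _ x y hxy ?_ ?_ ?_ ?_ hrec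
        · simp [hxC', hxC]; omega
        · simp [hyC', hyC]; omega
        · simp [hxC, hyC]; omega
        · intro z h1 h2
          rw [if_congr (hmemC' z h1 h2) rfl rfl]

lemma feas_top {c : ℕ} {s : ℕ} {rest : List ℕ} {β : Fin c → ℕ}
    (h : Feas (s :: rest) β) :
    ∃ C : Finset (Fin c), C.card = s ∧ (∀ x ∈ C, 1 ≤ β x) ∧
      (∀ x ∈ C, ∀ y, y ∉ C → β y ≤ β x) ∧
      Feas rest (fun z => β z - if z ∈ C then 1 else 0) := by
  obtain ⟨C, hcard, hpos, hrec⟩ := h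
  obtain ⟨C', h1, h2, h3, h4⟩ := feas_top_aux rest β (∑ z ∈ Cᶜ, β z) C le_rfl hpos hrec
  exact ⟨C', h1.trans hcard, h2, h3, h4⟩

lemma exists_top_set {c : ℕ} (β : Fin c → ℕ) (s : ℕ) (hs : s ≤ c) :
    ∃ C : Finset (Fin c), C.card = s ∧ ∀ x ∈ C, ∀ y, y ∉ C → β y ≤ β x := by
  set e := (List.finRange c).mergeSort (fun a b => decide (β b ≤ β a)) with he
  have hperm : e.Perm (List.finRange c) := List.mergeSort_perm _ _
  have hnd : e.Nodup := hperm.symm.nodup (List.nodup_finRange c)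
  have hlen : e.length = c := by rw [hperm.length_eq, List.length_finRange]
  have hsortedE : e.Pairwise (fun a b => β b ≤ β a) := by
    have h := List.pairwise_mergeSort (le := fun a b : Fin c => decide (β b ≤ β a))
      (fun a b c h1 h2 => by simp only [decide_eq_true_eq] at *; omega)
      (fun a b => by simp only [Bool.or_eq_true, decide_eq_true_eq]; omega) (List.finRange c)
    exact h.imp (fun h => by simpa using h)
  refine ⟨(e.take s).toFinset, ?_, ?_⟩
  · rw [List.toFinset_card_of_nodup ((List.take_sublist _ _).nodup hnd),
      List.length_take, hlen]
    omega
  · intro x hx y hy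
    rw [List.mem_toFinset] at hx hy
    have hy' : y ∈ e.drop s := by
      have hye : y ∈ e := hperm.mem_iff.mpr (List.mem_finRange y)
      rw [← List.take_append_drop s e, List.mem_append] at hye
      tauto
    have hP : List.Pairwise (fun a b => β b ≤ β a) (e.take s ++ e.drop s) := by
      rw [List.take_append_drop]; exact hsortedE
    exact (List.pairwise_append.mp hP).2.2 x hx y hy'

lemma top_set_spec {c : ℕ} (β : Fin c → ℕ) (C : Finset (Fin c))
    (htop : ∀ x ∈ C, ∀ y, y ∉ C → β y ≤ β x) :
    ((List.ofFn fun z => β z - if z ∈ C then 1 else 0).Perm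
      ((((List.ofFn β).mergeSort (fun a b => decide (b ≤ a))).take C.card).map (fun v => v - 1) ++
        ((List.ofFn β).mergeSort (fun a b => decide (b ≤ a))).drop C.card))
    ∧ ((∀ x ∈ C, 1 ≤ β x) ↔
        ∀ v ∈ ((List.ofFn β).mergeSort (fun a b => decide (b ≤ a))).take C.card, 1 ≤ v) := by
  classical
  set e1 := C.toList.mergeSort (fun a b => decide (β b ≤ β a)) with he1
  set e2 := Cᶜ.toList.mergeSort (fun a b => decide (β b ≤ β a)) with he2
  have hp1 : e1.Perm C.toList := List.mergeSort_perm _ _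
  have hp2 : e2.Perm Cᶜ.toList := List.mergeSort_perm _ _
  have hmem1 : ∀ x ∈ e1, x ∈ C := fun x hx => Finset.mem_toList.mp (hp1.mem_iff.mp hx)
  have hmem2 : ∀ x ∈ e2, x ∉ C := fun x hx =>
    Finset.mem_compl.mp (Finset.mem_toList.mp (hp2.mem_iff.mp hx))
  have he12 : (e1 ++ e2).Perm (List.finRange c) := by
    apply List.perm_of_nodup_nodup_toFinset_eq
    · rw [List.nodup_append]
      refine ⟨hp1.symm.nodup C.nodup_toList, hp2.symm.nodup Cᶜ.nodup_toList, ?_⟩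
      intro a ha1 b hb2 hab
      subst hab
      exact hmem2 a hb2 (hmem1 a ha1)
    · exact List.nodup_finRange c
    · ext z
      simp only [List.mem_toFinset, List.mem_append, List.mem_finRange, iff_true]
      by_cases hz : z ∈ C
      · exact Or.inl (hp1.mem_iff.mpr (Finset.mem_toList.mpr hz))
      · exact Or.inr (hp2.mem_iff.mpr (Finset.mem_toList.mpr (Finset.mem_compl.mpr hz)))
  have hsorted1 : e1.Pairwise (fun a b => β b ≤ β a) := by
    have h := List.pairwise_mergeSort (le := fun a b : Fin c => decide (β b ≤ β a))
      (fun a b c h1 h2 => by simp only [decide_eq_true_eq] at *; omega)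
      (fun a b => by simp only [Bool.or_eq_true, decide_eq_true_eq]; omega) C.toList
    exact h.imp (fun h => by simpa using h)
  have hsorted2 : e2.Pairwise (fun a b => β b ≤ β a) := by
    have h := List.pairwise_mergeSort (le := fun a b : Fin c => decide (β b ≤ β a))
      (fun a b c h1 h2 => by simp only [decide_eq_true_eq] at *; omega)
      (fun a b => by simp only [Bool.or_eq_true, decide_eq_true_eq]; omega) Cᶜ.toList
    exact h.imp (fun h => by simpa using h)
  have hMsorted : List.Pairwise (fun a b : ℕ => b ≤ a) (List.map β (e1 ++ e2)) := by
    rw [List.map_append]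
    rw [List.pairwise_append]
    refine ⟨List.pairwise_map.mpr hsorted1, List.pairwise_map.mpr hsorted2, ?_⟩
    intro a ha b hb
    obtain ⟨x, hx, rfl⟩ := List.mem_map.mp ha
    obtain ⟨y, hy, rfl⟩ := List.mem_map.mp hb
    exact htop x (hmem1 x hx) y (hmem2 y hy)
  have hMperm : (List.map β (e1 ++ e2)).Perm (List.ofFn β) := by
    rw [List.ofFn_eq_map]
    exact he12.map β
  have hMeq : List.map β (e1 ++ e2) = (List.ofFn β).mergeSort (fun a b => decide (b ≤ a)) :=
    sortD_unique hMperm hMsorted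
  have hlen1 : (List.map β e1).length = C.card := by
    rw [List.length_map, hp1.length_eq, Finset.length_toList]
  have htake : ((List.ofFn β).mergeSort (fun a b => decide (b ≤ a))).take C.card
      = List.map β e1 := by
    rw [← hMeq, List.map_append, List.take_left' hlen1]
  have hdrop : ((List.ofFn β).mergeSort (fun a b => decide (b ≤ a))).drop C.card
      = List.map β e2 := by
    rw [← hMeq, List.map_append, List.drop_left' hlen1]
  constructor
  · rw [htake, hdrop]
    have h1 : (List.ofFn fun z => β z - if z ∈ C then 1 else 0).Perm
        (List.map (fun z => β z - if z ∈ C then 1 else 0) (e1 ++ e2)) := by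
      rw [List.ofFn_eq_map]
      exact (he12.map _).symm
    refine h1.trans ?_
    rw [List.map_append]
    have e1eq : List.map (fun z => β z - if z ∈ C then 1 else 0) e1
        = (List.map β e1).map (fun v => v - 1) := by
      rw [List.map_map]
      exact List.map_congr_left (fun a ha => by simp [hmem1 a ha])
    have e2eq : List.map (fun z => β z - if z ∈ C then 1 else 0) e2 = List.map β e2 :=
      List.map_congr_left (fun a ha => by simp [hmem2 a ha])
    rw [e1eq, e2eq]
  · rw [htake]
    constructor
    · intro h v hv
      obtain ⟨x, hx, rfl⟩ := List.mem_map.mp hv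
      exact h x (hmem1 x hx)
    · intro h x hx
      exact h (β x) (List.mem_map.mpr ⟨x, hp1.mem_iff.mpr (Finset.mem_toList.mpr hx), rfl⟩)

lemma greedyStep_eq (s : ℕ) (bs : List ℕ) :
    greedyStep s bs = if s ≤ (bs.mergeSort (fun a b => decide (b ≤ a))).length ∧
      (∀ x ∈ (bs.mergeSort (fun a b => decide (b ≤ a))).take s, 1 ≤ x) then
      some ((((bs.mergeSort (fun a b => decide (b ≤ a))).take s).map (fun x => x - 1)) ++
        (bs.mergeSort (fun a b => decide (b ≤ a))).drop s) else none := rfl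

lemma greedy_iff {c : ℕ} : ∀ (S : List ℕ) (β : Fin c → ℕ) (L : List ℕ),
    L.Perm (List.ofFn β) → (greedy S L = true ↔ Feas S β) := by
  intro S
  induction S with
  | nil => intro β L _; simp [greedy, Feas]
  | cons s rest ih =>
    intro β L hperm
    have hsorteq : L.mergeSort (fun a b => decide (b ≤ a)) =
        (List.ofFn β).mergeSort (fun a b => decide (b ≤ a)) :=
      sortD_unique ((List.mergeSort_perm L _).trans hperm) (sortD_sorted L)
    have hlen : ((List.ofFn β).mergeSort (fun a b => decide (b ≤ a))).length = c := by
      rw [(List.mergeSort_perm _ _).length_eq, List.length_ofFn]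
    clear hperm
    cases hstep : (if s ≤ ((List.ofFn β).mergeSort (fun a b => decide (b ≤ a))).length ∧
      (∀ x ∈ ((List.ofFn β).mergeSort (fun a b => decide (b ≤ a))).take s, 1 ≤ x) then
      some (((((List.ofFn β).mergeSort (fun a b => decide (b ≤ a))).take s).map (fun x => x - 1)) ++
        ((List.ofFn β).mergeSort (fun a b => decide (b ≤ a))).drop s) else none) with
    | none =>
      have hg : greedy (s :: rest) L = false := by
        rw [greedy, greedyStep_eq, hsorteq, hstep]
      rw [hg]
      simp only [Bool.false_eq_true, false_iff]
      intro hfeas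
      obtain ⟨C, hcard, hpos, htop, _⟩ := feas_top hfeas
      have hsc : s ≤ c := by
        rw [← hcard]
        simpa using Finset.card_le_univ C
      have hcond : s ≤ ((List.ofFn β).mergeSort (fun a b => decide (b ≤ a))).length ∧
          (∀ x ∈ ((List.ofFn β).mergeSort (fun a b => decide (b ≤ a))).take s, 1 ≤ x) := by
        constructor
        · rw [hlen]; exact hsc
        · have := (top_set_spec β C htop).2.mp hpos
          rwa [hcard] at this
      rw [if_pos hcond] at hstep
      exact Option.some_ne_none _ hstep
    | some L2 =>
      have hg : greedy (s :: rest) L = greedy rest L2 := by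
        rw [greedy, greedyStep_eq, hsorteq, hstep]
      rw [hg]
      split_ifs at hstep with hcond
      · have hL2 : L2 = ((((List.ofFn β).mergeSort (fun a b => decide (b ≤ a))).take s).map
            (fun x => x - 1)) ++ ((List.ofFn β).mergeSort (fun a b => decide (b ≤ a))).drop s :=
          (Option.some.inj hstep).symm
        constructor
        · intro hgr
          obtain ⟨C, hcard, htop⟩ := exists_top_set β s (by rw [hlen] at hcond; exact hcond.1)
          have spec := top_set_spec β C htop
          rw [hcard] at spec
          refine ⟨C, hcard, spec.2.mpr hcond.2, ?_⟩
          exact (ih _ L2 (by rw [hL2]; exact spec.1.symm)).mp hgr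
        · intro hfeas
          obtain ⟨C, hcard, hpos, htop, hrec⟩ := feas_top hfeas
          have spec := top_set_spec β C htop
          rw [hcard] at spec
          exact (ih _ L2 (by rw [hL2]; exact spec.1.symm)).mpr hrec

lemma countP_ofFn {α : Type*} (p : α → Bool) : ∀ {n : ℕ} (f : Fin n → α),
    (List.ofFn f).countP p = ∑ i, if p (f i) then 1 else 0
  | 0, f => by simp
  | n+1, f => by
    rw [List.ofFn_succ, List.countP_cons, countP_ofFn p, Fin.sum_univ_succ, Nat.add_comm]

lemma feas_of_counts {c : ℕ} : ∀ (S : List ℕ) (Cs : List (Finset (Fin c))) (β : Fin c → ℕ),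
    S.Perm (Cs.map Finset.card) →
    (∀ j, (Cs.countP (fun D => decide (j ∈ D))) ≤ β j) → Feas S β
  | [], _, β, _, _ => trivial
  | s :: S', Cs, β, hperm, hcount => by
    have hs : s ∈ Cs.map Finset.card := hperm.mem_iff.mp List.mem_cons_self
    obtain ⟨C, hC, hcard⟩ := List.mem_map.mp hs
    have hperm2 : Cs.Perm (C :: Cs.erase C) := List.perm_cons_erase hC
    have hcnt : ∀ j, ((Cs.erase C).countP (fun D => decide (j ∈ D)))
        + (if j ∈ C then 1 else 0) ≤ β j := by
      intro j
      have h1 := hcount j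
      rw [hperm2.countP_eq, List.countP_cons] at h1
      simpa using h1
    refine ⟨C, hcard, ?_, ?_⟩
    · intro j hj
      have := hcnt j
      rw [if_pos hj] at this
      omega
    · have hperm3 : S'.Perm ((Cs.erase C).map Finset.card) := by
        have h2 : (s :: S').Perm (Finset.card C :: (Cs.erase C).map Finset.card) :=
          hperm.trans (hperm2.map Finset.card)
        rw [hcard] at h2
        exact h2.cons_inv
      refine feas_of_counts S' (Cs.erase C) _ hperm3 ?_
      intro j
      have := hcnt j
      by_cases hj : j ∈ C <;> simp [hj] at this ⊢ <;> omega

lemma counts_of_feas {c : ℕ} : ∀ (S : List ℕ) (β : Fin c → ℕ), Feas S β →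
    ∃ Cs : List (Finset (Fin c)), Cs.map Finset.card = S ∧
      ∀ j, (Cs.countP (fun D => decide (j ∈ D))) ≤ β j
  | [], β, _ => ⟨[], rfl, by simp⟩
  | s :: S', β, ⟨C, hcard, hpos, hrec⟩ => by
    obtain ⟨Cs', hmap, hcnt⟩ := counts_of_feas S' _ hrec
    refine ⟨C :: Cs', by simp [hmap, hcard], ?_⟩
    intro j
    rw [List.countP_cons]
    have h1 := hcnt j
    by_cases hj : j ∈ C
    · have := hpos j hj
      simp only [hj, if_true] at h1
      simp [hj]
      omega
    · simp only [hj, if_false] at h1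
      simp [hj]
      omega

lemma perm_map_lift {α γ : Type*} [DecidableEq α] (g : α → γ) :
    ∀ (l2 : List γ) (l' : List α), l2.Perm (l'.map g) →
      ∃ l'' : List α, l''.Perm l' ∧ l''.map g = l2
  | [], l', h => by
    have hl' : l' = [] := by
      have := h.symm.eq_nil
      simpa using this
    exact ⟨[], by rw [hl'], rfl⟩
  | b :: t, l', h => by
    have hb : b ∈ l'.map g := h.mem_iff.mp List.mem_cons_self
    obtain ⟨a, ha, hab⟩ := List.mem_map.mp hb
    have hperm2 : l'.Perm (a :: l'.erase a) := List.perm_cons_erase ha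
    have ht : t.Perm ((l'.erase a).map g) := by
      have h2 := h.trans (hperm2.map g)
      rw [List.map_cons, hab] at h2
      exact h2.cons_inv
    obtain ⟨t'', ht'', hmt⟩ := perm_map_lift g t (l'.erase a) ht
    exact ⟨a :: t'', (ht''.cons a).trans hperm2.symm, by simp [hmt, hab]⟩


theorem stmt3 {V : Type*} [Fintype V] [DecidableEq V] (G : SimpleGraph V)
    (ℓ c : ℕ) (K : Fin ℓ → Finset V)
    (hpart : ∀ v, ∃! i, v ∈ K i)
    (hadj : ∀ u v, G.Adj u v ↔ u ≠ v ∧ ∃ i, u ∈ K i ∧ v ∈ K i)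
    (b : Fin c → ℕ) :
    greedy ((List.ofFn fun i => (K i).card).mergeSort (fun a b => decide (b ≤ a)))
        (List.ofFn b) = true ↔
      ∃ φ : V → Fin c, (∀ u v, G.Adj u v → φ u ≠ φ v) ∧
        ∀ i, (univ.filter fun v => φ v = i).card ≤ b i := by
  classical
  set SL := (List.ofFn fun i => (K i).card).mergeSort (fun a b => decide (b ≤ a)) with hSL
  have hSLperm : SL.Perm (List.ofFn fun i => (K i).card) := List.mergeSort_perm _ _
  -- common facts about the clique partition
  have hdisj : ∀ (j : Fin c), ∀ i1 ∈ (univ : Finset (Fin ℓ)), ∀ i2 ∈ (univ : Finset (Fin ℓ)),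
      i1 ≠ i2 → ∀ (ψ : V → Fin c), Disjoint ((K i1).filter (fun v => ψ v = j))
        ((K i2).filter (fun v => ψ v = j)) := by
    intro j i1 _ i2 _ hne ψ
    rw [Finset.disjoint_left]
    intro v hv1 hv2
    rw [Finset.mem_filter] at hv1 hv2
    obtain ⟨i0, _, huniq⟩ := hpart v
    exact hne ((huniq i1 hv1.1).trans (huniq i2 hv2.1).symm)
  have hcover : ∀ (j : Fin c) (ψ : V → Fin c),
      univ.filter (fun v => ψ v = j) = univ.biUnion (fun i => (K i).filter (fun v => ψ v = j)) := by
    intro j ψ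
    ext v
    simp only [Finset.mem_filter, Finset.mem_univ, true_and, Finset.mem_biUnion]
    constructor
    · intro hv
      obtain ⟨i0, hi0, -⟩ := hpart v
      exact ⟨i0, hi0, hv⟩
    · rintro ⟨i0, -, hv⟩
      exact hv
  rw [greedy_iff SL b (List.ofFn b) (List.Perm.refl _)]
  constructor
  · -- greedy succeeds → coloring exists
    intro hfeas
    obtain ⟨Cs, hmap, hcnt⟩ := counts_of_feas SL b hfeas
    have hperm : (List.ofFn fun i => (K i).card).Perm (Cs.map Finset.card) := by
      rw [hmap]; exact hSLperm.symm
    obtain ⟨Cs'', hCs'', hmapCs''⟩ := perm_map_lift Finset.card _ Cs hperm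
    have hlen2 : Cs''.length = ℓ := by
      have h := congrArg List.length hmapCs''
      simpa using h
    set D : Fin ℓ → Finset (Fin c) :=
      fun i => Cs''[i.val]'(by rw [hlen2]; exact i.isLt) with hD
    have hofFnD : List.ofFn D = Cs'' := by
      apply List.ext_getElem
      · simp [hlen2]
      · intro k h1 h2
        simp [hD]
    have hcardD : ∀ i : Fin ℓ, (D i).card = (K i).card := by
      intro i
      have h1 : (Cs''.map Finset.card)[i.val]'(by simp [hlen2]) =
          (List.ofFn fun i => (K i).card)[i.val]'(by simp) := by
        congr 1
      simpa [hD] using h1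
    have hcntD : ∀ j, (∑ i : Fin ℓ, if j ∈ D i then 1 else 0) ≤ b j := by
      intro j
      have h1 : Cs''.countP (fun E => decide (j ∈ E)) = Cs.countP (fun E => decide (j ∈ E)) :=
        hCs''.countP_eq _
      have h2 : (List.ofFn D).countP (fun E => decide (j ∈ E)) =
          ∑ i : Fin ℓ, if j ∈ D i then 1 else 0 := by
        rw [countP_ofFn]
        simp only [decide_eq_true_eq]
      rw [hofFnD, h1] at h2
      rw [← h2]
      exact hcnt j
    -- build the coloring
    have hidx : ∀ v : V, v ∈ K ((hpart v).choose) := fun v => (hpart v).choose_spec.1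
    have hidx' : ∀ v j, v ∈ K j → j = (hpart v).choose := fun v j h => (hpart v).choose_spec.2 j h
    set E : ∀ i : Fin ℓ, {x // x ∈ K i} ≃ {x // x ∈ D i} :=
      fun i => Finset.equivOfCardEq (hcardD i).symm with hE
    set φ : V → Fin c := fun v => ((E ((hpart v).choose)) ⟨v, hidx v⟩ : {x // x ∈ D _}).val
      with hφ
    have hφmem : ∀ (i : Fin ℓ) (w : V) (hw : w ∈ K i),
        φ w = ((E i) ⟨w, hw⟩ : {x // x ∈ D i}).val := by
      intro i w hw
      have h := hidx' w i hw
      subst h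
      rfl
    have hφinj : ∀ (i : Fin ℓ) (w z : V) (hw : w ∈ K i) (hz : z ∈ K i),
        φ w = φ z → w = z := by
      intro i w z hw hz h
      rw [hφmem i w hw, hφmem i z hz] at h
      have h2 := (E i).injective (Subtype.ext h)
      exact congrArg Subtype.val h2
    refine ⟨φ, ?_, ?_⟩
    · intro u v huv h
      obtain ⟨hne, i, hu, hv⟩ := (hadj u v).mp huv
      exact hne (hφinj i u v hu hv h)
    · intro j
      rw [hcover j φ, Finset.card_biUnion (fun i1 h1 i2 h2 h3 => hdisj j i1 h1 i2 h2 h3 φ)]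
      refine le_trans (Finset.sum_le_sum (fun i _ => ?_)) (hcntD j)
      by_cases hj : j ∈ D i
      · simp only [hj, if_true]
        rw [Finset.card_le_one]
        intro a ha b hb
        rw [Finset.mem_filter] at ha hb
        exact hφinj i a b ha.1 hb.1 (ha.2.trans hb.2.symm)
      · simp only [hj, if_false, Nat.le_zero, Finset.card_eq_zero]
        rw [Finset.filter_eq_empty_iff]
        intro v hv hvj
        exact hj (hvj ▸ (by rw [hφmem i v hv]; exact ((E i) ⟨v, hv⟩).2))
  · -- coloring exists → greedy succeeds
    rintro ⟨φ, hproper, hbud⟩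
    refine feas_of_counts SL (List.ofFn fun i => (K i).image φ) b ?_ ?_
    · rw [List.map_ofFn]
      have h1 : (Finset.card ∘ fun i => (K i).image φ) = fun i => (K i).card := by
        funext i
        simp only [Function.comp_apply]
        apply Finset.card_image_of_injOn
        intro u hu v hv huv
        by_contra hne
        exact hproper u v ((hadj u v).mpr ⟨hne, i, hu, hv⟩) huv
      rw [h1]
      exact hSLperm
    · intro j
      have h2 : (List.ofFn fun i => (K i).image φ).countP (fun E => decide (j ∈ E)) =
          ∑ i : Fin ℓ, if j ∈ (K i).image φ then 1 else 0 := by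
        rw [countP_ofFn]
        simp only [decide_eq_true_eq]
      rw [h2]
      have h3 : ∀ i : Fin ℓ, (if j ∈ (K i).image φ then 1 else 0) ≤
          ((K i).filter (fun v => φ v = j)).card := by
        intro i
        by_cases hj : j ∈ (K i).image φ
        · simp only [hj, if_true]
          obtain ⟨v, hv, hvj⟩ := Finset.mem_image.mp hj
          exact Finset.card_pos.mpr ⟨v, Finset.mem_filter.mpr ⟨hv, hvj⟩⟩
        · simp [hj]
      refine le_trans (Finset.sum_le_sum (fun i _ => h3 i)) ?_
      rw [← Finset.card_biUnion (fun i1 h1 i2 h2 h3 => hdisj j i1 h1 i2 h2 h3 φ), ← hcover j φ]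
      exact hbud j
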